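/- Assume an exponential trichotomy with exponents a < 0 < b and projectors π₋, π₀, π₊ bounded by N. Let 0 < η < min{−a, b} and s ∈ ℝ. Then a vector y₀ ∈ ℝⁿ lies in the center subspace E₀(s) if and only if the solution t ↦ U(t,s)y₀ of y' = A(t)y belongs to BC_s^η, i.e. sup_t e^{−η|t−s|}‖U(t,s)y₀‖ < ∞. -/

import Mathlib

lemma aux_norm_zero {m : ℕ} (v : Fin m → ℝ) (K c : ℝ) (hc : c < 0)
    (h : ∀ u : ℝ, 0 ≤ u → ‖v‖ ≤ K * Real.exp (c * u)) : v = 0 := by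
  have h1 : Filter.Tendsto (fun u : ℝ => c * u) Filter.atTop Filter.atBot :=
    Filter.Tendsto.const_mul_atTop_of_neg hc Filter.tendsto_id
  have h2 : Filter.Tendsto (fun u : ℝ => K * Real.exp (c * u)) Filter.atTop (nhds 0) := by
    have := (Real.tendsto_exp_atBot.comp h1).const_mul K
    simpa using this
  have h3 : ‖v‖ ≤ 0 := by
    refine ge_of_tendsto h2 ?_
    filter_upwards [Filter.eventually_ge_atTop (0:ℝ)] with u hu
    exact h u hu
  simpa using le_antisymm h3 (norm_nonneg v)

/-- Characterization of the center subspace: under an exponential trichotomy with exponents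
`a < 0 < b`, for `0 < η < min (-a) b` a vector `y₀` lies in `E₀(s) = ran (π₀ s)` iff the
solution `t ↦ U t s y₀` has weighted sup-norm `sup_t e^{-η|t-s|}‖U t s y₀‖ < ∞`. -/
theorem stmt_6 {n : ℕ}
    (U : ℝ → ℝ → ((Fin n → ℝ) →L[ℝ] (Fin n → ℝ)))
    (πm π0 πp : ℝ → ((Fin n → ℝ) →L[ℝ] (Fin n → ℝ)))
    (hcocycle : ∀ t r s : ℝ, (U t r).comp (U r s) = U t s)
    (hid : ∀ s : ℝ, U s s = ContinuousLinearMap.id ℝ (Fin n → ℝ))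
    (hsum : ∀ t : ℝ, πm t + π0 t + πp t = ContinuousLinearMap.id ℝ (Fin n → ℝ))
    (hidem : ∀ t : ℝ, (πm t).comp (πm t) = πm t ∧ (π0 t).comp (π0 t) = π0 t ∧
      (πp t).comp (πp t) = πp t)
    (horth : ∀ t : ℝ, (πm t).comp (π0 t) = 0 ∧ (π0 t).comp (πp t) = 0 ∧
      (πp t).comp (πm t) = 0 ∧ (π0 t).comp (πm t) = 0 ∧ (πp t).comp (π0 t) = 0 ∧
      (πm t).comp (πp t) = 0)
    (hcomm : ∀ t s : ℝ, (U t s).comp (πm s) = (πm t).comp (U t s) ∧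
      (U t s).comp (π0 s) = (π0 t).comp (U t s) ∧ (U t s).comp (πp s) = (πp t).comp (U t s))
    (N : ℝ) (hN : ∀ t : ℝ, ‖πm t‖ ≤ N ∧ ‖π0 t‖ ≤ N ∧ ‖πp t‖ ≤ N)
    (a b : ℝ) (ha : a < 0) (hb : 0 < b)
    (htri : ∀ ε : ℝ, 0 < ε → ∃ C : ℝ, 0 < C ∧
      (∀ t s : ℝ, s ≤ t → ‖(U t s).comp (πm s)‖ ≤ C * Real.exp (a * (t - s))) ∧
      (∀ t s : ℝ, ‖(U t s).comp (π0 s)‖ ≤ C * Real.exp (ε * |t - s|)) ∧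
      (∀ t s : ℝ, t ≤ s → ‖(U t s).comp (πp s)‖ ≤ C * Real.exp (b * (t - s))))
    (η : ℝ) (hη0 : 0 < η) (hηa : η < -a) (hηb : η < b)
    (s : ℝ) (y₀ : Fin n → ℝ) :
    y₀ ∈ LinearMap.range (π0 s : (Fin n → ℝ) →ₗ[ℝ] (Fin n → ℝ)) ↔
      ∃ C : ℝ, ∀ t : ℝ, Real.exp (-η * |t - s|) * ‖U t s y₀‖ ≤ C := by
  obtain ⟨C, hC, hCm, hC0, hCp⟩ := htri η hη0
  constructor
  · rintro ⟨x, hx⟩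
    have hy : (π0 s) y₀ = y₀ := by
      rw [← hx]
      have := congrArg (fun (f : (Fin n → ℝ) →L[ℝ] (Fin n → ℝ)) => f x) (hidem s).2.1
      simpa using this
    refine ⟨C * ‖y₀‖, fun t => ?_⟩
    have h1 : ‖U t s y₀‖ ≤ C * Real.exp (η * |t - s|) * ‖y₀‖ := by
      calc ‖U t s y₀‖ = ‖((U t s).comp (π0 s)) y₀‖ := by simp [ContinuousLinearMap.comp_apply, hy]
        _ ≤ ‖(U t s).comp (π0 s)‖ * ‖y₀‖ := (ContinuousLinearMap.le_opNorm _ _)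
        _ ≤ C * Real.exp (η * |t - s|) * ‖y₀‖ :=
            mul_le_mul_of_nonneg_right (hC0 t s) (norm_nonneg _)
    calc Real.exp (-η * |t - s|) * ‖U t s y₀‖
        ≤ Real.exp (-η * |t - s|) * (C * Real.exp (η * |t - s|) * ‖y₀‖) :=
          mul_le_mul_of_nonneg_left h1 (Real.exp_pos _).le
      _ = C * ‖y₀‖ := by
          rw [show Real.exp (-η * |t - s|) * (C * Real.exp (η * |t - s|) * ‖y₀‖)
              = (Real.exp (-η * |t - s|) * Real.exp (η * |t - s|)) * (C * ‖y₀‖) by ring,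
            ← Real.exp_add]
          simp
  · rintro ⟨C', hC'⟩
    have hC'0 : 0 ≤ C' := le_trans (by positivity) (hC' s)
    have hbound : ∀ t : ℝ, ‖U t s y₀‖ ≤ C' * Real.exp (η * |t - s|) := by
      intro t
      calc ‖U t s y₀‖ = Real.exp (η * |t - s|) * (Real.exp (-η * |t - s|) * ‖U t s y₀‖) := by
            rw [← mul_assoc, ← Real.exp_add]; simp
        _ ≤ Real.exp (η * |t - s|) * C' :=
            mul_le_mul_of_nonneg_left (hC' t) (Real.exp_pos _).le
        _ = C' * Real.exp (η * |t - s|) := mul_comm _ _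
    -- key: recover projections at s from those at t
    have hback : ∀ (π : ℝ → ((Fin n → ℝ) →L[ℝ] (Fin n → ℝ)))
        (hc : ∀ t : ℝ, (U t s).comp (π s) = (π t).comp (U t s)) (t : ℝ),
        (π s) y₀ = ((U s t).comp (π t)) (U t s y₀) := by
      intro π hc t
      have h1 : (U t s) ((π s) y₀) = (π t) ((U t s) y₀) := by
        have := congrArg (fun (f : (Fin n → ℝ) →L[ℝ] (Fin n → ℝ)) => f y₀) (hc t)
        simpa using this
      have h2 : (U s t) ((U t s) ((π s) y₀)) = (π s) y₀ := by
        have := congrArg (fun (f : (Fin n → ℝ) →L[ℝ] (Fin n → ℝ)) => f ((π s) y₀))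
          (hcocycle s t s)
        simpa [hid s] using this
      rw [ContinuousLinearMap.comp_apply, ← h1, h2]
    -- πp s y₀ = 0
    have hp0 : (πp s) y₀ = 0 := by
      apply aux_norm_zero _ (C * C') (η - b) (by linarith)
      intro u hu
      set t := s + u with ht
      have hts : t - s = u := by simp [ht]
      have habs : |t - s| = u := by rw [hts, abs_of_nonneg hu]
      have h1 : (πp s) y₀ = ((U s t).comp (πp t)) (U t s y₀) :=
        hback πp (fun t => (hcomm t s).2.2) t
      have h2 : ‖(U s t).comp (πp t)‖ ≤ C * Real.exp (b * (s - t)) :=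
        hCp s t (by linarith [hu, ht] : s ≤ t)
      calc ‖(πp s) y₀‖ ≤ ‖(U s t).comp (πp t)‖ * ‖U t s y₀‖ := by
            rw [h1]; exact ContinuousLinearMap.le_opNorm _ _
        _ ≤ (C * Real.exp (b * (s - t))) * (C' * Real.exp (η * |t - s|)) :=
            mul_le_mul h2 (hbound t) (norm_nonneg _) (by positivity)
        _ = (C * C') * Real.exp ((η - b) * u) := by
            rw [habs, show s - t = -u by rw [ht]; ring,
              show (η - b) * u = b * -u + η * u by ring, Real.exp_add]
            ring
    -- πm s y₀ = 0
    have hm0 : (πm s) y₀ = 0 := by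
      apply aux_norm_zero _ (C * C') (a + η) (by linarith)
      intro u hu
      set t := s - u with ht
      have hst : s - t = u := by simp [ht]
      have habs : |t - s| = u := by rw [show t - s = -u by rw [ht]; ring, abs_neg, abs_of_nonneg hu]
      have h1 : (πm s) y₀ = ((U s t).comp (πm t)) (U t s y₀) :=
        hback πm (fun t => (hcomm t s).1) t
      have h2 : ‖(U s t).comp (πm t)‖ ≤ C * Real.exp (a * (s - t)) :=
        hCm s t (by linarith [hu] : t ≤ s)
      calc ‖(πm s) y₀‖ ≤ ‖(U s t).comp (πm t)‖ * ‖U t s y₀‖ := by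
            rw [h1]; exact ContinuousLinearMap.le_opNorm _ _
        _ ≤ (C * Real.exp (a * (s - t))) * (C' * Real.exp (η * |t - s|)) :=
            mul_le_mul h2 (hbound t) (norm_nonneg _) (by positivity)
        _ = (C * C') * Real.exp ((a + η) * u) := by
            rw [habs, hst, show (a + η) * u = a * u + η * u by ring, Real.exp_add]; ring
    have hsy : (π0 s) y₀ = y₀ := by
      have := congrArg (fun (f : (Fin n → ℝ) →L[ℝ] (Fin n → ℝ)) => f y₀) (hsum s)
      simp only [ContinuousLinearMap.add_apply, ContinuousLinearMap.id_apply] at this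
      rw [hm0, hp0] at this
      simpa using this
    exact ⟨y₀, hsy⟩
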